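/- arXiv:1612.00769 — 2 statements merged into one kernel-verified Lean document; each statement's English description precedes it below -/
import Mathlib

section
/- For the block matrix M = [[I, cL], [-dL, I]] with c, d > 0 and L a symmetric positive semidefinite real matrix, M is invertible. -/
open Matrix
theorem block_matrix_invertible_of_psd (n : ℕ) (L : Matrix (Fin n) (Fin n) ℝ)
    (hsym : L.transpose = L) (hpsd : ∀ x : Fin n → ℝ, 0 ≤ x ⬝ᵥ L.mulVec x)
    (c d : ℝ) (hc : 0 < c) (hd : 0 < d) :
    IsUnit (Matrix.fromBlocks 1 (c • L) (-(d • L)) (1 : Matrix (Fin n) (Fin n) ℝ)) := by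
  rw [Matrix.isUnit_iff_isUnit_det, Matrix.det_fromBlocks_one₁₁, isUnit_iff_ne_zero]
  have hM : (1 : Matrix (Fin n) (Fin n) ℝ) - -(d • L) * (c • L)
      = 1 + (d * c) • (L * L) := by
    rw [Matrix.neg_mul, sub_neg_eq_add, smul_mul_smul_comm]
  rw [hM]
  have hpd : ((1 : Matrix (Fin n) (Fin n) ℝ) + (d * c) • (L * L)).PosDef := by
    rw [Matrix.posDef_iff_dotProduct_mulVec]
    constructor
    · have hL : Lᴴ = L := by
        rw [Matrix.conjTranspose]
        ext i j
        simp [Matrix.map_apply]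
        exact congrFun (congrFun hsym i) j
      rw [Matrix.IsHermitian, conjTranspose_add, conjTranspose_smul, conjTranspose_mul, hL]
      simp
    · intro x hx
      have key : star x ⬝ᵥ ((1 : Matrix (Fin n) (Fin n) ℝ) + (d * c) • (L * L)).mulVec x
          = x ⬝ᵥ x + (d * c) * (L.mulVec x ⬝ᵥ L.mulVec x) := by
        simp only [Matrix.add_mulVec, Matrix.smul_mulVec, dotProduct_add,
          Matrix.one_mulVec, dotProduct_smul, smul_eq_mul, star_trivial]
        congr 1
        rw [← Matrix.mulVec_mulVec, Matrix.dotProduct_mulVec,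
          show x ᵥ* L = Lᵀ *ᵥ x from by
            conv_lhs => rw [← Matrix.transpose_transpose L]
            rw [Matrix.vecMul_transpose]]
        rw [hsym]
      rw [key]
      have h1 : 0 < x ⬝ᵥ x := by
        have : x ⬝ᵥ x = ∑ i, x i * x i := rfl
        rw [this]
        apply Finset.sum_pos' (fun i _ => mul_self_nonneg _)
        obtain ⟨i, hi⟩ : ∃ i, x i ≠ 0 := Function.ne_iff.mp hx
        exact ⟨i, Finset.mem_univ i, mul_self_pos.mpr hi⟩
      have h2 : 0 ≤ (d * c) * (L.mulVec x ⬝ᵥ L.mulVec x) :=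
        mul_nonneg (mul_pos hd hc).le (by
          have : L.mulVec x ⬝ᵥ L.mulVec x = ∑ i, L.mulVec x i * L.mulVec x i := rfl
          rw [this]; exact Finset.sum_nonneg fun i _ => mul_self_nonneg _)
      linarith
  exact hpd.det_pos.ne'
end

section
/- For c, d > 0 and L symmetric PSD with spectral decomposition, the eigenvalues of the block matrix [[I, cL],[-dL, I]] are 1 ± i√(cd)·λ over ℂ, where λ ranges over eigenvalues of L; consequently every eigenvalue has real part 1 and the matrix is invertible. -/
open Matrix

lemma mem_spectrum_iff_det' {m K : Type*} [Fintype m] [DecidableEq m] [Field K]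
    (A : Matrix m m K) (z : K) : z ∈ spectrum K A ↔ (z • (1 : Matrix m m K) - A).det = 0 := by
  rw [spectrum.mem_iff, Algebra.algebraMap_eq_smul_one, Matrix.isUnit_iff_isUnit_det,
    isUnit_iff_ne_zero, not_not]

lemma spec_complexify' {n : ℕ} (L : Matrix (Fin n) (Fin n) ℝ) (hsym : L.transpose = L) (z : ℂ) :
    z ∈ spectrum ℂ (L.map Complex.ofReal) ↔ ∃ lam : ℝ, lam ∈ spectrum ℝ L ∧ z = (lam : ℂ) := by
  set Lc := L.map Complex.ofReal with hLc
  have hherm : Lc.IsHermitian := by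
    ext i j
    simp [Lc, Matrix.conjTranspose_apply, ← congrFun (congrFun hsym i) j, Matrix.transpose_apply]
  have hmap : ∀ lam : ℝ, ((lam : ℂ) • (1 : Matrix (Fin n) (Fin n) ℂ) - Lc) =
      ((lam • (1 : Matrix (Fin n) (Fin n) ℝ) - L)).map Complex.ofRealHom := by
    intro lam
    ext i j
    by_cases h : i = j <;> simp [Lc, Matrix.one_apply, h]
  have hdet : ∀ lam : ℝ, ((lam : ℂ) • (1 : Matrix (Fin n) (Fin n) ℂ) - Lc).det =
      Complex.ofReal ((lam • (1 : Matrix (Fin n) (Fin n) ℝ) - L).det) := by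
    intro lam
    rw [hmap lam, ← RingHom.mapMatrix_apply, ← RingHom.map_det]
    rfl
  have hreal : ∀ lam : ℝ, ((lam : ℂ) ∈ spectrum ℂ Lc ↔ lam ∈ spectrum ℝ L) := by
    intro lam
    rw [mem_spectrum_iff_det', mem_spectrum_iff_det', hdet lam, Complex.ofReal_eq_zero]
  constructor
  · intro hz
    have hrange : spectrum ℂ Lc = Set.range (fun i => (hherm.eigenvalues i : ℂ)) := by
      conv_lhs => rw [hherm.spectral_theorem, Unitary.conjStarAlgAut_apply, Unitary.spectrum_star_right_conjugate,
        spectrum_diagonal]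
      rfl
    rw [hrange] at hz
    obtain ⟨i, hi⟩ := hz
    refine ⟨hherm.eigenvalues i, ?_, hi.symm⟩
    rw [← hreal, hrange]
    exact ⟨i, rfl⟩
  · rintro ⟨lam, hlam, rfl⟩
    exact (hreal lam).mpr hlam

lemma key_conj' {n : ℕ} (Lc : Matrix (Fin n) (Fin n) ℂ) (a cc dd t : ℂ)
    (haac : a * (a * cc) = -dd) :
    fromBlocks (t • (1 : Matrix (Fin n) (Fin n) ℂ)) (-(cc • Lc)) (dd • Lc) (t • 1) *
      fromBlocks 1 1 (a • 1) (-(a • 1))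
    = fromBlocks 1 1 (a • 1) (-(a • 1)) *
      fromBlocks (t • 1 - (a * cc) • Lc) 0 0 (t • 1 + (a * cc) • Lc) := by
  rw [fromBlocks_multiply, fromBlocks_multiply]
  refine fromBlocks_inj.mpr ⟨?_, ?_, ?_, ?_⟩ <;>
  · simp only [Matrix.mul_one, Matrix.one_mul, Matrix.mul_smul, Matrix.smul_mul,
      Matrix.mul_zero, add_zero, zero_add, Matrix.neg_mul, Matrix.mul_neg, smul_smul,
      Matrix.mul_sub, Matrix.mul_add]
    match_scalars
    all_goals try ring
    all_goals linear_combination haac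

lemma factor_det_eq_zero_iff {n : ℕ} (L : Matrix (Fin n) (Fin n) ℝ) (hsym : L.transpose = L)
    (u t : ℂ) (hu : u ≠ 0) :
    (t • (1 : Matrix (Fin n) (Fin n) ℂ) - u • L.map Complex.ofReal).det = 0 ↔
      ∃ lam : ℝ, lam ∈ spectrum ℝ L ∧ t = u * lam := by
  have hfac : t • (1 : Matrix (Fin n) (Fin n) ℂ) - u • L.map Complex.ofReal =
      u • ((t / u) • (1 : Matrix (Fin n) (Fin n) ℂ) - L.map Complex.ofReal) := by
    rw [smul_sub, smul_smul, mul_div_cancel₀ _ hu]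
  rw [hfac, Matrix.det_smul, mul_eq_zero, or_iff_right (pow_ne_zero _ hu),
    ← mem_spectrum_iff_det', spec_complexify' L hsym]
  constructor
  · rintro ⟨lam, hl, h⟩
    exact ⟨lam, hl, by field_simp at h; linear_combination h⟩
  · rintro ⟨lam, hl, h⟩
    exact ⟨lam, hl, by field_simp; linear_combination h⟩

theorem block_matrix_spectrum (n : ℕ) (L : Matrix (Fin n) (Fin n) ℝ)
    (hsym : L.transpose = L) (hpsd : ∀ x : Fin n → ℝ, 0 ≤ x ⬝ᵥ L.mulVec x)
    (c d : ℝ) (hc : 0 < c) (hd : 0 < d) :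
    let Lc : Matrix (Fin n) (Fin n) ℂ := L.map (Complex.ofReal)
    let M : Matrix (Fin n ⊕ Fin n) (Fin n ⊕ Fin n) ℂ :=
      Matrix.fromBlocks 1 ((c : ℂ) • Lc) (-((d : ℂ) • Lc)) 1
    (∀ μ : ℂ, μ ∈ spectrum ℂ M ↔
        ∃ lam : ℝ, lam ∈ spectrum ℝ L ∧
          (μ = 1 + Complex.I * (Real.sqrt (c * d) * lam) ∨
           μ = 1 - Complex.I * (Real.sqrt (c * d) * lam))) ∧
      (0 : ℂ) ∉ spectrum ℂ M ∧ IsUnit M := by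
  intro Lc M
  set s : ℝ := Real.sqrt (c * d) with hs_def
  set a : ℂ := Complex.I * (Real.sqrt (d / c) : ℂ) with ha_def
  have hc' : (c : ℂ) ≠ 0 := by exact_mod_cast hc.ne'
  have hsqdc : (Real.sqrt (d / c) : ℝ) ^ 2 = d / c := Real.sq_sqrt (by positivity)
  have ha2 : a ^ 2 * (c : ℂ) = -(d : ℂ) := by
    rw [ha_def, mul_pow, Complex.I_sq]
    rw [show ((Real.sqrt (d / c) : ℂ)) ^ 2 = ((d / c : ℝ) : ℂ) by
      rw [← Complex.ofReal_pow, hsqdc]]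
    push_cast
    field_simp
  have haac : a * (a * (c : ℂ)) = -(d : ℂ) := by rw [← mul_assoc, ← sq]; exact ha2
  have hac : a * (c : ℂ) = Complex.I * (s : ℂ) := by
    rw [ha_def, hs_def, mul_assoc]
    congr 1
    rw [← Complex.ofReal_mul]
    congr 1
    rw [show c * d = (d / c) * c ^ 2 by field_simp, Real.sqrt_mul (by positivity),
      Real.sqrt_sq hc.le]
  have ha0 : a ≠ 0 := by
    rw [ha_def]
    simp only [ne_eq, mul_eq_zero, Complex.I_ne_zero, Complex.ofReal_eq_zero, false_or]
    positivity
  have hu0 : Complex.I * (s : ℂ) ≠ 0 := by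
    rw [← hac]
    exact mul_ne_zero ha0 hc'
  set V : Matrix (Fin n ⊕ Fin n) (Fin n ⊕ Fin n) ℂ :=
    fromBlocks 1 1 ((a : ℂ) • 1) (-((a : ℂ) • 1)) with hV_def
  have hdetV : V.det = (-(2 * a)) ^ n := by
    rw [hV_def, det_fromBlocks_one₁₁, Matrix.mul_one]
    have : -(a • (1 : Matrix (Fin n) (Fin n) ℂ)) - a • 1 = (-(2 * a)) • 1 := by module
    rw [this, Matrix.det_smul, det_one, mul_one, Fintype.card_fin]
  have hdetV0 : V.det ≠ 0 := by
    rw [hdetV]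
    exact pow_ne_zero _ (by simpa using ha0)
  have key : ∀ t : ℂ,
      fromBlocks (t • (1 : Matrix (Fin n) (Fin n) ℂ)) (-((c : ℂ) • Lc)) ((d : ℂ) • Lc) (t • 1) * V
        = V * fromBlocks (t • 1 - (a * c) • Lc) 0 0 (t • 1 + (a * c) • Lc) := fun t =>
    key_conj' Lc a c d t haac
  have hdetM : ∀ μ : ℂ, (μ • (1 : Matrix (Fin n ⊕ Fin n) (Fin n ⊕ Fin n) ℂ) - M).det =
      ((μ - 1) • (1 : Matrix (Fin n) (Fin n) ℂ) - (a * c) • Lc).det *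
      ((μ - 1) • (1 : Matrix (Fin n) (Fin n) ℂ) + (a * c) • Lc).det := by
    intro μ
    have hblock : μ • (1 : Matrix (Fin n ⊕ Fin n) (Fin n ⊕ Fin n) ℂ) - M =
        fromBlocks ((μ - 1) • (1 : Matrix (Fin n) (Fin n) ℂ)) (-((c : ℂ) • Lc))
          ((d : ℂ) • Lc) ((μ - 1) • 1) := by
      rw [show M = fromBlocks 1 ((c : ℂ) • Lc) (-((d : ℂ) • Lc)) 1 from rfl,
        ← fromBlocks_one (l := Fin n) (m := Fin n), fromBlocks_smul]
      ext (i | i) (j | j) <;>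
        simp [fromBlocks, sub_smul, Matrix.sub_apply, Matrix.smul_apply, Matrix.one_apply]
    have h2 := congrArg Matrix.det (key (μ - 1))
    rw [det_mul, det_mul, det_fromBlocks_zero₂₁] at h2
    rw [hblock]
    exact mul_right_cancel₀ hdetV0 (by rw [h2]; ring)
  have hchar : ∀ μ : ℂ, μ ∈ spectrum ℂ M ↔
      ∃ lam : ℝ, lam ∈ spectrum ℝ L ∧
        (μ = 1 + Complex.I * (s * lam) ∨ μ = 1 - Complex.I * (s * lam)) := by
    intro μ
    have hQ : ((μ - 1) • (1 : Matrix (Fin n) (Fin n) ℂ) + (a * c) • Lc) =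
        ((μ - 1) • (1 : Matrix (Fin n) (Fin n) ℂ) - (-(a * c)) • Lc) := by
      rw [neg_smul, sub_neg_eq_add]
    rw [mem_spectrum_iff_det', hdetM μ, hQ, mul_eq_zero, hac,
      factor_det_eq_zero_iff L hsym _ _ hu0,
      factor_det_eq_zero_iff L hsym _ _ (neg_ne_zero.mpr hu0)]
    constructor
    · rintro (⟨lam, hl, h⟩ | ⟨lam, hl, h⟩)
      · exact ⟨lam, hl, Or.inl (by push_cast at h ⊢; linear_combination h)⟩
      · exact ⟨lam, hl, Or.inr (by push_cast at h ⊢; linear_combination h)⟩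
    · rintro ⟨lam, hl, (h | h)⟩
      · exact Or.inl ⟨lam, hl, by push_cast at h ⊢; linear_combination h⟩
      · exact Or.inr ⟨lam, hl, by push_cast at h ⊢; linear_combination h⟩
  refine ⟨hchar, ?_, ?_⟩
  · intro h0
    obtain ⟨lam, _, (h | h)⟩ := (hchar 0).mp h0
    · have := congrArg Complex.re h
      simp [Complex.add_re, Complex.mul_re] at this
    · have := congrArg Complex.re h
      simp [Complex.sub_re, Complex.mul_re] at this
  · have h0 : (0 : ℂ) ∉ spectrum ℂ M := by
      intro h0
      obtain ⟨lam, _, (h | h)⟩ := (hchar 0).mp h0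
      · have := congrArg Complex.re h
        simp [Complex.add_re, Complex.mul_re] at this
      · have := congrArg Complex.re h
        simp [Complex.sub_re, Complex.mul_re] at this
    rw [spectrum.zero_mem_iff, not_not] at h0
    exact h0
end
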